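/- Let p, γ ∈ (0, 1) and define the four Kraus matrices K₀ := √p · [[1, 0], [0, √(1−γ)]], K₁ := √p · [[0, √γ], [0, 0]], K₂ := √(1−p) · [[√(1−γ), 0], [0, 1]], K₃ := √(1−p) · [[0, 0], [√γ, 0]] (2 × 2 complex matrices). Then ∑_{a=0}^{3} K_aᴴ K_a = 1, and the generalized amplitude-damping channel Φ(X) := ∑_{a=0}^{3} K_a X K_aᴴ maps every nonzero positive semidefinite 2 × 2 complex matrix X to a positive definite matrix. -/

import Mathlib

open Matrix
open scoped ComplexOrder

/-- **Strict positivity of the generalized amplitude-damping channel.**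
The four GAD Kraus operators form a perfect measurement
(`∑ Kᴴ K = 1`), and the channel `X ↦ ∑ K X Kᴴ` sends every nonzero positive
semidefinite `2 × 2` matrix to a positive definite one. -/
theorem stmt17 (p γ : ℝ) (hp : p ∈ Set.Ioo (0 : ℝ) 1) (hγ : γ ∈ Set.Ioo (0 : ℝ) 1)
    (K : Fin 4 → Matrix (Fin 2) (Fin 2) ℂ)
    (hK0 : K 0 = (Real.sqrt p : ℂ) • !![1, 0; 0, (Real.sqrt (1 - γ) : ℂ)])
    (hK1 : K 1 = (Real.sqrt p : ℂ) • !![0, (Real.sqrt γ : ℂ); 0, 0])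
    (hK2 : K 2 = (Real.sqrt (1 - p) : ℂ) • !![(Real.sqrt (1 - γ) : ℂ), 0; 0, 1])
    (hK3 : K 3 = (Real.sqrt (1 - p) : ℂ) • !![0, 0; (Real.sqrt γ : ℂ), 0]) :
    (∑ a, (K a)ᴴ * K a = 1) ∧
    (∀ X : Matrix (Fin 2) (Fin 2) ℂ, X.PosSemidef → X ≠ 0 →
      (∑ a, K a * X * (K a)ᴴ).PosDef) := by
  obtain ⟨hp0, hp1⟩ := hp
  obtain ⟨hγ0, hγ1⟩ := hγ
  have hsp : ((Real.sqrt p : ℂ)) * (Real.sqrt p : ℂ) = (p : ℂ) := by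
    rw [← Complex.ofReal_mul, Real.mul_self_sqrt hp0.le]
  have hsq : ((Real.sqrt (1-p) : ℂ)) * (Real.sqrt (1-p) : ℂ) = ((1-p : ℝ) : ℂ) := by
    rw [← Complex.ofReal_mul, Real.mul_self_sqrt (by linarith)]
  have hsg : ((Real.sqrt γ : ℂ)) * (Real.sqrt γ : ℂ) = (γ : ℂ) := by
    rw [← Complex.ofReal_mul, Real.mul_self_sqrt hγ0.le]
  have hsh : ((Real.sqrt (1-γ) : ℂ)) * (Real.sqrt (1-γ) : ℂ) = ((1-γ : ℝ) : ℂ) := by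
    rw [← Complex.ofReal_mul, Real.mul_self_sqrt (by linarith)]
  have hsp2 : ((Real.sqrt p : ℂ))^2 = (p : ℂ) := by rw [sq, hsp]
  have hsq2 : ((Real.sqrt (1-p) : ℂ))^2 = ((1:ℂ)-p) := by rw [sq, hsq]; push_cast; ring
  have hsg2 : ((Real.sqrt γ : ℂ))^2 = (γ : ℂ) := by rw [sq, hsg]
  have hsh2 : ((Real.sqrt (1-γ) : ℂ))^2 = ((1:ℂ)-γ) := by rw [sq, hsh]; push_cast; ring
  constructor
  · ext i j
    fin_cases i <;> fin_cases j <;>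
      simp [Fin.sum_univ_four, hK0, hK1, hK2, hK3, Matrix.mul_apply,
        Fin.sum_univ_two, Matrix.conjTranspose_apply, Matrix.one_apply] <;>
      push_cast <;> ring_nf <;>
      first
      | linear_combination hsp2 + ((Real.sqrt (1-γ):ℂ)^2 + (Real.sqrt γ:ℂ)^2) * hsq2
          + ((1:ℂ)-p) * hsh2 + ((1:ℂ)-p) * hsg2
      | linear_combination ((Real.sqrt (1-γ):ℂ)^2 + (Real.sqrt γ:ℂ)^2) * hsp2 + hsq2
          + (p:ℂ) * hsh2 + (p:ℂ) * hsg2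
  · intro X hX hXne
    set a := (X 0 0).re with ha
    set d := (X 1 1).re with hd
    set b := X 0 1 with hb
    have hX00 : X 0 0 = (a : ℂ) := (hX.1.coe_re_apply_self 0).symm
    have hX11 : X 1 1 = (d : ℂ) := (hX.1.coe_re_apply_self 1).symm
    have hX10 : X 1 0 = star b := by
      conv_lhs => rw [← hX.1]
      rfl
    clear_value a d b
    have ha0 : 0 ≤ a := by
      have h := hX.dotProduct_mulVec_nonneg (Pi.single 0 1)
      simp [dotProduct, mulVec, Fin.sum_univ_two, Pi.single_apply] at h
      rw [hX00] at h
      exact_mod_cast h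
    have hd0 : 0 ≤ d := by
      have h := hX.dotProduct_mulVec_nonneg (Pi.single 1 1)
      simp [dotProduct, mulVec, Fin.sum_univ_two, Pi.single_apply] at h
      rw [hX11] at h
      exact_mod_cast h
    have hdet : Complex.normSq b ≤ a * d := by
      obtain ⟨B, hB⟩ : ∃ B : Matrix (Fin 2) (Fin 2) ℂ, X = Bᴴ * B := by
        open scoped MatrixOrder in exact CStarAlgebra.nonneg_iff_eq_star_mul_self.mp hX.nonneg
      have h1 : X.det = ((Complex.normSq B.det : ℝ) : ℂ) := by
        rw [hB, Matrix.det_mul, Matrix.det_conjTranspose, mul_comm]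
        simp [Complex.star_def, Complex.mul_conj]
      have h2 : X.det = ((a * d - Complex.normSq b : ℝ) : ℂ) := by
        rw [Matrix.det_fin_two, hX00, hX11, hX10]
        have hbb : X 0 1 * star b = ((Complex.normSq b : ℝ) : ℂ) := by
          rw [← hb, Complex.star_def, Complex.mul_conj]
        rw [hbb]
        push_cast
        ring
      have h3 : a * d - Complex.normSq b = Complex.normSq B.det := by
        exact_mod_cast h2.symm.trans h1
      nlinarith [Complex.normSq_nonneg B.det]
    have had : 0 < a + d := by
      rcases lt_or_eq_of_le (add_nonneg ha0 hd0) with h | h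
      · exact h
      have haz : a = 0 := by linarith
      have hdz : d = 0 := by linarith
      have hbz : b = 0 := by
        have : Complex.normSq b ≤ 0 := by rw [haz, hdz] at hdet; linarith
        exact Complex.normSq_eq_zero.mp (le_antisymm this (Complex.normSq_nonneg b))
      refine absurd ?_ hXne
      ext i j
      fin_cases i <;> fin_cases j <;>
        simp [hX00, hX11, hX10, ← hb, hbz, haz, hdz]
    have hMpsd : (∑ a, K a * X * (K a)ᴴ).PosSemidef := by
      rw [Fin.sum_univ_four]
      exact (((hX.mul_mul_conjTranspose_same _).add
        (hX.mul_mul_conjTranspose_same _)).add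
        (hX.mul_mul_conjTranspose_same _)).add (hX.mul_mul_conjTranspose_same _)
    set A : ℝ := (1 - γ + p*γ)*a + p*γ*d with hA
    set D : ℝ := (1 - p*γ)*d + (1-p)*γ*a with hD
    have hM : ∑ a, K a * X * (K a)ᴴ =
        !![(A:ℂ), (Real.sqrt (1-γ):ℂ) * b;
           (Real.sqrt (1-γ):ℂ) * star b, (D:ℂ)] := by
      ext i j
      fin_cases i <;> fin_cases j <;>
        simp [Fin.sum_univ_four, hK0, hK1, hK2, hK3, Matrix.mul_apply,
          Fin.sum_univ_two, Matrix.conjTranspose_apply, Complex.star_def,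
          Complex.conj_ofReal, hX00, hX11, hX10, hA, hD,
          Matrix.vecMul, dotProduct] <;>
        push_cast <;> ring_nf <;>
        first
        | linear_combination ((a:ℂ) + (d:ℂ)*(Real.sqrt γ:ℂ)^2) * hsp2
            + (d:ℂ)*(p:ℂ) * hsg2 + (a:ℂ)*(Real.sqrt (1-γ):ℂ)^2 * hsq2
            + (a:ℂ)*((1:ℂ)-p) * hsh2
        | linear_combination (X 0 1)*(Real.sqrt (1-γ):ℂ) * hsp2
            + (X 0 1)*(Real.sqrt (1-γ):ℂ) * hsq2 - (Real.sqrt (1-γ):ℂ) * hb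
        | linear_combination (starRingEnd ℂ b)*(Real.sqrt (1-γ):ℂ) * hsp2
            + (starRingEnd ℂ b)*(Real.sqrt (1-γ):ℂ) * hsq2
        | linear_combination (d:ℂ)*(Real.sqrt (1-γ):ℂ)^2 * hsp2
            + (d:ℂ)*(p:ℂ) * hsh2 + (d:ℂ) * hsq2
            + (a:ℂ)*(Real.sqrt γ:ℂ)^2 * hsq2 + (a:ℂ)*((1:ℂ)-p) * hsg2
    clear_value A D
    have hADpos : 0 < A * D - (1-γ) * Complex.normSq b := by
      have hnb := Complex.normSq_nonneg b
      rw [hA, hD]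
      have hpγ : 0 < p * γ := mul_pos hp0 hγ0
      have hpγ1 : p * γ < 1 := by nlinarith
      have h1 : 0 ≤ (1-γ) * (a*d - Complex.normSq b) :=
        mul_nonneg (by linarith) (by linarith)
      have h2 : 0 ≤ 2*p*(1-p)*γ^2*(a*d) :=
        mul_nonneg (mul_nonneg (mul_nonneg (by linarith) (by linarith))
          (sq_nonneg γ)) (mul_nonneg ha0 hd0)
      have hg1 : 0 < 1 - γ + p*γ := by linarith
      have hpg2 : 0 < (1-p)*γ := mul_pos (by linarith) hγ0
      have hpg1 : 0 < 1 - p*γ := by linarith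
      have h4a : 0 ≤ (1-γ+p*γ)*((1-p)*γ)*a^2 :=
        mul_nonneg (mul_nonneg hg1.le hpg2.le) (sq_nonneg a)
      have h4d : 0 ≤ (p*γ)*(1-p*γ)*d^2 :=
        mul_nonneg (mul_nonneg hpγ.le hpg1.le) (sq_nonneg d)
      rcases lt_or_eq_of_le ha0 with hap | hap
      · have h3 : 0 < (1-γ+p*γ)*((1-p)*γ)*a^2 :=
          mul_pos (mul_pos hg1 hpg2) (pow_pos hap 2)
        linarith [h1, h2, h3, h4d]
      · have hdp : 0 < d := by linarith
        have h3 : 0 < (p*γ)*(1-p*γ)*d^2 :=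
          mul_pos (mul_pos hpγ hpg1) (pow_pos hdp 2)
        linarith [h1, h2, h3, h4a]
    have hdetM : (∑ a, K a * X * (K a)ᴴ).det ≠ 0 := by
      rw [hM, Matrix.det_fin_two_of]
      have : (A:ℂ) * (D:ℂ) - (Real.sqrt (1-γ):ℂ) * b * ((Real.sqrt (1-γ):ℂ) * star b)
          = ((A * D - (1-γ) * Complex.normSq b : ℝ) : ℂ) := by
        have : b * star b = ((Complex.normSq b : ℝ) : ℂ) := by
          rw [mul_comm, Complex.star_def, Complex.normSq_eq_conj_mul_self]
        push_cast
        rw [mul_assoc ((Real.sqrt (1-γ):ℂ)), mul_comm b, ← mul_assoc, ← mul_assoc, hsh]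
        rw [mul_assoc, mul_comm (star b) b]
        rw [show b * star b = ((Complex.normSq b : ℝ) : ℂ) from this]
        push_cast
        ring
      rw [this]
      exact_mod_cast Complex.ofReal_ne_zero.mpr (ne_of_gt hADpos)
    refine Matrix.PosDef.of_dotProduct_mulVec_pos hMpsd.1 (fun v hv => ?_)
    rcases lt_or_eq_of_le (hMpsd.dotProduct_mulVec_nonneg v) with h | h
    · exact h
    exfalso
    have hMv : (∑ a, K a * X * (K a)ᴴ) *ᵥ v = 0 :=
      (hMpsd.dotProduct_mulVec_zero_iff v).mp h.symm
    have : v = 0 := by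
      have hu : IsUnit (∑ a, K a * X * (K a)ᴴ).det := isUnit_iff_ne_zero.mpr hdetM
      calc v = 1 *ᵥ v := (Matrix.one_mulVec v).symm
        _ = ((∑ a, K a * X * (K a)ᴴ)⁻¹ * (∑ a, K a * X * (K a)ᴴ)) *ᵥ v := by
            rw [Matrix.nonsing_inv_mul _ hu]
        _ = (∑ a, K a * X * (K a)ᴴ)⁻¹ *ᵥ ((∑ a, K a * X * (K a)ᴴ) *ᵥ v) := by
            rw [Matrix.mulVec_mulVec]
        _ = 0 := by rw [hMv, Matrix.mulVec_zero]
    exact hv this
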